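/- (Gillis' Lemma) For all ε, δ > 0 and m ∈ ℕ there exists n = n(ε,δ,m) ∈ ℕ such that for any probability space (Ω,Σ,μ) and any measurable sets A_1,…,A_n with μ(A_i) ≥ ε for all i, there is a subset s ⊆ {1,…,n} of cardinality m with μ(⋂_{i∈s} A_i) ≥ (1−δ)ε^m. -/

import Mathlib

open MeasureTheory
open scoped ENNReal

lemma gillis_key_up (m K : ℕ) : ∀ d : ℕ, K.choose m * d + K.choose (m + 1) ≤ (K + d).choose (m + 1)
  | 0 => by simp
  | d + 1 => by
    have h1 : K.choose m ≤ (K + d).choose m := Nat.choose_le_choose _ (Nat.le_add_right _ _)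
    have h2 := gillis_key_up m K d
    have h3 : (K + (d + 1)).choose (m + 1) = (K + d).choose m + (K + d).choose (m + 1) := by
      rw [show K + (d + 1) = (K + d) + 1 from rfl, Nat.choose_succ_succ]
    nlinarith [h1, h2, h3]

lemma gillis_key_down (m k : ℕ) : ∀ d : ℕ, (k + d).choose (m + 1) ≤ k.choose (m + 1) + (k + d).choose m * d
  | 0 => by simp
  | d + 1 => by
    have h1 : (k + d).choose m ≤ (k + d + 1).choose m := Nat.choose_le_choose _ (by omega)
    have h2 := gillis_key_down m k d
    have h3 : (k + (d + 1)).choose (m + 1) = (k + d).choose m + (k + d).choose (m + 1) := by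
      rw [show k + (d + 1) = (k + d) + 1 from rfl, Nat.choose_succ_succ]
    have h4 : (k + d).choose m * d ≤ (k + d + 1).choose m * d := Nat.mul_le_mul_right d h1
    show (k + d + 1).choose (m + 1) ≤ k.choose (m + 1) + (k + d + 1).choose m * (d + 1)
    have h5 : (k + d + 1).choose m * (d + 1) = (k + d + 1).choose m * d + (k + d + 1).choose m := by ring
    have h3' : (k + d + 1).choose (m + 1) = (k + d).choose m + (k + d).choose (m + 1) := h3
    nlinarith [h1, h2, h3', h4, h5]

lemma gillis_key (m K k : ℕ) :
    K.choose m * k + K.choose (m + 1) ≤ k.choose (m + 1) + K.choose m * K := by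
  rcases le_total K k with h | h
  · obtain ⟨d, rfl⟩ := Nat.exists_eq_add_of_le h
    have := gillis_key_up m K d
    nlinarith [this, Nat.mul_add (K.choose m) K d]
  · obtain ⟨d, rfl⟩ := Nat.exists_eq_add_of_le h
    have := gillis_key_down m k d
    nlinarith [this, Nat.mul_add ((k + d).choose m) k d]

/-- Gillis' Lemma: for all `ε, δ > 0` and `m`, there is `n` such that among any `n`
measurable sets of measure at least `ε` in a probability space, some `m` of them have
intersection of measure at least `(1 - δ) * ε ^ m`. -/
theorem gillis_lemma (ε δ : ℝ) (hε : 0 < ε) (hδ : 0 < δ) (m : ℕ) :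
    ∃ n : ℕ, ∀ (Ω : Type) (_ : MeasurableSpace Ω) (μ : Measure Ω),
      IsProbabilityMeasure μ → ∀ A : Fin n → Set Ω,
      (∀ i, MeasurableSet (A i)) → (∀ i, ENNReal.ofReal ε ≤ μ (A i)) →
      ∃ s : Finset (Fin n), s.card = m ∧
        ENNReal.ofReal ((1 - δ) * ε ^ m) ≤ μ (⋂ i ∈ s, A i) := by
  classical
  rcases le_or_gt 1 δ with hδ1 | hδ1
  · -- trivial case δ ≥ 1
    refine ⟨m, fun Ω _ μ hμ A hA hAε => ⟨Finset.univ, by simp, ?_⟩⟩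
    have h0 : (1 - δ) * ε ^ m ≤ 0 :=
      mul_nonpos_of_nonpos_of_nonneg (by linarith) (pow_nonneg hε.le m)
    rw [ENNReal.ofReal_of_nonpos h0]
    exact zero_le
  rcases lt_or_ge 1 ε with hε1 | hε1
  · -- contradictory case ε > 1
    refine ⟨1, fun Ω _ μ hμ A hA hAε => absurd (hAε 0) (not_le.mpr ?_)⟩
    calc μ (A 0) ≤ 1 := prob_le_one
      _ < ENNReal.ofReal ε := ENNReal.one_lt_ofReal.mpr hε1
  cases m with
  | zero =>
    refine ⟨0, fun Ω _ μ hμ A hA hAε => ⟨∅, rfl, ?_⟩⟩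
    simp only [Finset.notMem_empty, Set.iInter_of_empty, Set.iInter_univ, pow_zero, mul_one,
      measure_univ]
    exact ENNReal.ofReal_le_one.mpr (by linarith)
  | succ m' =>
    set M : ℕ := m' + 1 with hM
    obtain ⟨n, hMn, hnε⟩ : ∃ n : ℕ, M ≤ n ∧ ((M : ℝ)) ^ 2 / δ ≤ n * ε := by
      refine ⟨max M (⌈(((M : ℝ)) ^ 2 / δ) / ε⌉₊ + 1), le_max_left _ _, ?_⟩
      set n : ℕ := max M (⌈(((M : ℝ)) ^ 2 / δ) / ε⌉₊ + 1) with hn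
      have h1 : (((M : ℝ)) ^ 2 / δ) / ε ≤ (⌈(((M : ℝ)) ^ 2 / δ) / ε⌉₊ : ℝ) := Nat.le_ceil _
      have h2 : ((⌈(((M : ℝ)) ^ 2 / δ) / ε⌉₊ : ℕ) : ℝ) ≤ (n : ℝ) :=
        Nat.cast_le.mpr (le_trans (Nat.le_succ _) (le_max_right _ _))
      calc ((M : ℝ)) ^ 2 / δ = ((((M : ℝ)) ^ 2 / δ) / ε) * ε := by field_simp
        _ ≤ (n : ℝ) * ε := by
            apply mul_le_mul_of_nonneg_right (le_trans h1 h2) hε.le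
    refine ⟨n, fun Ω mΩ μ hμ A hA hAε => ?_⟩
    have hx0 : (0 : ℝ) < n * ε := by
      have : (0 : ℝ) < ((M : ℝ)) ^ 2 / δ := by positivity
      linarith
    have hMx : (M : ℝ) ≤ n * ε := by
      have h1 : (1 : ℝ) ≤ M := by exact_mod_cast Nat.one_le_iff_ne_zero.mpr (by omega)
      have h2 : (M : ℝ) ≤ ((M : ℝ)) ^ 2 := by nlinarith
      have h3 : ((M : ℝ)) ^ 2 ≤ ((M : ℝ)) ^ 2 / δ := by
        rw [le_div_iff₀ hδ]; nlinarith
      linarith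
    set K : ℕ := ⌊(n : ℝ) * ε⌋₊ with hKdef
    have hKle : (K : ℝ) ≤ n * ε := Nat.floor_le hx0.le
    have hKgt : (n : ℝ) * ε < K + 1 := Nat.lt_floor_add_one _
    set a : ℕ := K.choose m' with ha
    have hbKle : K.choose M ≤ a * K := by
      have := gillis_key m' K 0
      simpa using this
    set b : ℕ := a * K - K.choose M with hb
    have hab : K.choose M + b = a * K := by omega
    have hkey : ∀ k : ℕ, a * k ≤ k.choose M + b := by
      intro k
      have h1 := gillis_key m' K k
      have h2 : a * k + K.choose M ≤ k.choose M + (K.choose M + b) := by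
        rw [hab]; exact h1
      omega
    -- the counting function
    set T : Ω → Finset (Fin n) := fun ω => Finset.univ.filter (fun i => ω ∈ A i) with hT
    set P : Finset (Finset (Fin n)) := Finset.powersetCard M Finset.univ with hP
    have hTsum : (fun ω => ((T ω).card : ℝ≥0∞)) =
        fun ω => ∑ i : Fin n, (A i).indicator (1 : Ω → ℝ≥0∞) ω := by
      funext ω
      simp only [Set.indicator_apply, Pi.one_apply, Finset.sum_boole, hT]
    have hTmeas : Measurable (fun ω => ((T ω).card : ℝ≥0∞)) := by
      rw [hTsum]
      exact Finset.measurable_sum _ (fun i _ => measurable_const.indicator (hA i))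
    have hint1 : ∫⁻ ω, ((T ω).card : ℝ≥0∞) ∂μ = ∑ i : Fin n, μ (A i) := by
      simp only [hTsum]
      have hmeas1 : ∀ i ∈ (Finset.univ : Finset (Fin n)),
          Measurable ((A i).indicator (1 : Ω → ℝ≥0∞)) :=
        fun i _ => measurable_const.indicator (hA i)
      rw [lintegral_finset_sum (f := fun i => (A i).indicator (1 : Ω → ℝ≥0∞)) _ hmeas1]
      exact Finset.sum_congr rfl (fun i _ => lintegral_indicator_one (hA i))
    have hCsum : (fun ω => (((T ω).card.choose M : ℕ) : ℝ≥0∞)) =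
        fun ω => ∑ s ∈ P, (⋂ i ∈ s, A i).indicator (1 : Ω → ℝ≥0∞) ω := by
      funext ω
      have h1 : ∀ s : Finset (Fin n),
          (⋂ i ∈ s, A i).indicator (1 : Ω → ℝ≥0∞) ω = if s ⊆ T ω then 1 else 0 := by
        intro s
        simp only [Set.indicator_apply, Set.mem_iInter, Pi.one_apply]
        congr 1
        simp only [eq_iff_iff, Finset.subset_iff, hT, Finset.mem_filter, Finset.mem_univ,
          true_and]
      rw [Finset.sum_congr rfl (fun s _ => h1 s), Finset.sum_boole]
      have h2 : P.filter (· ⊆ T ω) = Finset.powersetCard M (T ω) := by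
        ext s
        simp only [Finset.mem_filter, Finset.mem_powersetCard, hP, Finset.subset_univ, true_and]
        tauto
      rw [h2, Finset.card_powersetCard]
    have hint2 : ∫⁻ ω, (((T ω).card.choose M : ℕ) : ℝ≥0∞) ∂μ = ∑ s ∈ P, μ (⋂ i ∈ s, A i) := by
      simp only [hCsum]
      have hmeas2 : ∀ s ∈ P, Measurable ((⋂ i ∈ s, A i).indicator (1 : Ω → ℝ≥0∞)) :=
        fun s _ =>
          measurable_const.indicator (MeasurableSet.biInter (Set.to_countable _) (fun i _ => hA i))
      rw [lintegral_finset_sum (f := fun s => (⋂ i ∈ s, A i).indicator (1 : Ω → ℝ≥0∞)) _ hmeas2]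
      exact Finset.sum_congr rfl (fun s _ =>
        lintegral_indicator_one (MeasurableSet.biInter (Set.to_countable _) (fun i _ => hA i)))
    have hpoint : ∀ ω, (a : ℝ≥0∞) * ((T ω).card : ℝ≥0∞) ≤
        (((T ω).card.choose M : ℕ) : ℝ≥0∞) + (b : ℝ≥0∞) := by
      intro ω
      have := hkey (T ω).card
      exact_mod_cast this
    have hint3 : (a : ℝ≥0∞) * ∑ i : Fin n, μ (A i) ≤
        (∑ s ∈ P, μ (⋂ i ∈ s, A i)) + (b : ℝ≥0∞) := by
      calc (a : ℝ≥0∞) * ∑ i : Fin n, μ (A i)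
          = ∫⁻ ω, (a : ℝ≥0∞) * ((T ω).card : ℝ≥0∞) ∂μ := by
            rw [lintegral_const_mul _ hTmeas, hint1]
        _ ≤ ∫⁻ ω, ((((T ω).card.choose M : ℕ) : ℝ≥0∞) + (b : ℝ≥0∞)) ∂μ :=
            lintegral_mono hpoint
        _ = (∑ s ∈ P, μ (⋂ i ∈ s, A i)) + (b : ℝ≥0∞) := by
            rw [lintegral_add_right _ measurable_const, hint2, lintegral_const, measure_univ,
              mul_one]
    have hsum : (n : ℝ≥0∞) * ENNReal.ofReal ε ≤ ∑ i : Fin n, μ (A i) := by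
      calc (n : ℝ≥0∞) * ENNReal.ofReal ε = ∑ _i : Fin n, ENNReal.ofReal ε := by
            simp [Finset.sum_const, nsmul_eq_mul]
        _ ≤ _ := Finset.sum_le_sum (fun i _ => hAε i)
    -- the real-number inequality
    have hMK : (M : ℝ) < (K : ℝ) + 1 := lt_of_le_of_lt hMx hKgt
    have hMKnat : M ≤ K := by
      have : M < K + 1 := by exact_mod_cast hMK
      omega
    have hcast : (((K + 1 - M : ℕ)) : ℝ) = (K : ℝ) + 1 - M := by
      have : M ≤ K + 1 := by omega
      push_cast [this]
      ring
    have hmain : ((n.choose M : ℕ) : ℝ) * ((1 - δ) * ε ^ M) ≤ ((K.choose M : ℕ) : ℝ) := by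
      have h1 : ((n.choose M : ℕ) : ℝ) ≤ ((n : ℝ)) ^ M / (M.factorial : ℝ) := by
        have := Nat.choose_le_pow_div (α := ℝ) M n
        push_cast at this ⊢
        convert this using 2
      have h2 : (((K + 1 - M : ℕ) : ℝ)) ^ M / (M.factorial : ℝ) ≤ ((K.choose M : ℕ) : ℝ) := by
        have := Nat.pow_le_choose (α := ℝ) M K
        push_cast at this ⊢
        convert this using 2
      have hfac : (0 : ℝ) < (M.factorial : ℝ) := by exact_mod_cast Nat.factorial_pos M
      -- Bernoulli step: (1-δ) * (nε)^M ≤ (nε - M)^M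
      set x : ℝ := (n : ℝ) * ε with hx
      have hbern : 1 - (M : ℝ) ^ 2 / x ≤ (1 - (M : ℝ) / x) ^ M := by
        have h3 : (-2 : ℝ) ≤ -((M : ℝ) / x) := by
          have : (M : ℝ) / x ≤ 1 := (div_le_one hx0).mpr hMx
          linarith
        have := one_add_mul_le_pow h3 M
        calc 1 - (M : ℝ) ^ 2 / x = 1 + (M : ℝ) * -((M : ℝ) / x) := by
              field_simp; ring
          _ ≤ (1 + -((M : ℝ) / x)) ^ M := this
          _ = (1 - (M : ℝ) / x) ^ M := by ring_nf
      have hδx : (M : ℝ) ^ 2 / x ≤ δ := by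
        rw [div_le_iff₀ hx0]
        calc (M : ℝ) ^ 2 = ((M : ℝ) ^ 2 / δ) * δ := by
              field_simp
          _ ≤ x * δ := by
              apply mul_le_mul_of_nonneg_right hnε hδ.le
          _ = δ * x := mul_comm _ _
      have hstep : (1 - δ) * x ^ M ≤ (x - M) ^ M := by
        calc (1 - δ) * x ^ M ≤ (1 - (M : ℝ) ^ 2 / x) * x ^ M := by
              apply mul_le_mul_of_nonneg_right (by linarith) (by positivity)
          _ ≤ (1 - (M : ℝ) / x) ^ M * x ^ M := by
              apply mul_le_mul_of_nonneg_right hbern (by positivity)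
          _ = ((1 - (M : ℝ) / x) * x) ^ M := (mul_pow _ _ _).symm
          _ = (x - M) ^ M := by
              congr 1
              field_simp
      have hstep2 : (x - M) ^ M ≤ (((K + 1 - M : ℕ) : ℝ)) ^ M := by
        rw [hcast]
        apply pow_le_pow_left₀ (by linarith) (by linarith)
      have hε' : ε ^ M ≤ x ^ M / (n : ℝ) ^ M := by
        have hn0 : (0 : ℝ) < n := by
          have : (0 : ℕ) < n := by omega
          exact_mod_cast this
        rw [hx, mul_pow, mul_comm, mul_div_assoc, div_self (by positivity), mul_one]
      calc ((n.choose M : ℕ) : ℝ) * ((1 - δ) * ε ^ M)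
          ≤ ((n : ℝ) ^ M / (M.factorial : ℝ)) * ((1 - δ) * ε ^ M) := by
            apply mul_le_mul_of_nonneg_right h1
            apply mul_nonneg (by linarith) (by positivity)
        _ ≤ (((K + 1 - M : ℕ) : ℝ)) ^ M / (M.factorial : ℝ) := by
            rw [div_mul_eq_mul_div, div_le_div_iff₀ hfac hfac]
            apply mul_le_mul_of_nonneg_right _ hfac.le
            calc (n : ℝ) ^ M * ((1 - δ) * ε ^ M)
                ≤ (n : ℝ) ^ M * ((1 - δ) * (x ^ M / (n : ℝ) ^ M)) := by
                  apply mul_le_mul_of_nonneg_left _ (by positivity)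
                  apply mul_le_mul_of_nonneg_left hε' (by linarith)
              _ = (1 - δ) * x ^ M := by
                  have hn0 : (0 : ℝ) < (n : ℝ) ^ M := by
                    have : (0 : ℕ) < n := by omega
                    positivity
                  field_simp
              _ ≤ (((K + 1 - M : ℕ) : ℝ)) ^ M := le_trans hstep hstep2
        _ ≤ ((K.choose M : ℕ) : ℝ) := h2
    -- assemble in ℝ≥0∞
    have hreal : ((n.choose M : ℕ) : ℝ) * ((1 - δ) * ε ^ M) + (b : ℝ) ≤ (a : ℝ) * ((n : ℝ) * ε) := by
      have hbr : (b : ℝ) = (a : ℝ) * K - (K.choose M : ℝ) := by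
        rw [hb]
        push_cast [Nat.cast_sub hbKle]
        ring
      have haK : (a : ℝ) * K ≤ (a : ℝ) * (n * ε) := by
        apply mul_le_mul_of_nonneg_left hKle (by positivity)
      linarith [hmain]
    have hbne : (b : ℝ≥0∞) ≠ ⊤ := ENNReal.natCast_ne_top b
    have hfinal : ((n.choose M : ℕ) : ℝ≥0∞) * ENNReal.ofReal ((1 - δ) * ε ^ M) ≤
        ∑ s ∈ P, μ (⋂ i ∈ s, A i) := by
      rw [← ENNReal.add_le_add_iff_right hbne]
      have hL : ((n.choose M : ℕ) : ℝ≥0∞) * ENNReal.ofReal ((1 - δ) * ε ^ M) + (b : ℝ≥0∞) =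
          ENNReal.ofReal (((n.choose M : ℕ) : ℝ) * ((1 - δ) * ε ^ M) + (b : ℝ)) := by
        have hy : (0 : ℝ) ≤ (1 - δ) * ε ^ M := mul_nonneg (by linarith) (by positivity)
        rw [ENNReal.ofReal_add (mul_nonneg (Nat.cast_nonneg _) hy) (Nat.cast_nonneg _),
          ENNReal.ofReal_mul (Nat.cast_nonneg _), ENNReal.ofReal_natCast, ENNReal.ofReal_natCast]
      have hR : (a : ℝ≥0∞) * ((n : ℝ≥0∞) * ENNReal.ofReal ε) =
          ENNReal.ofReal ((a : ℝ) * ((n : ℝ) * ε)) := by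
        rw [ENNReal.ofReal_mul (Nat.cast_nonneg _), ENNReal.ofReal_mul (Nat.cast_nonneg _),
          ENNReal.ofReal_natCast, ENNReal.ofReal_natCast]
      calc ((n.choose M : ℕ) : ℝ≥0∞) * ENNReal.ofReal ((1 - δ) * ε ^ M) + (b : ℝ≥0∞)
          = ENNReal.ofReal (((n.choose M : ℕ) : ℝ) * ((1 - δ) * ε ^ M) + (b : ℝ)) := hL
        _ ≤ ENNReal.ofReal ((a : ℝ) * ((n : ℝ) * ε)) := ENNReal.ofReal_le_ofReal hreal
        _ = (a : ℝ≥0∞) * ((n : ℝ≥0∞) * ENNReal.ofReal ε) := hR.symm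
        _ ≤ (a : ℝ≥0∞) * ∑ i : Fin n, μ (A i) := mul_le_mul_right hsum _
        _ ≤ (∑ s ∈ P, μ (⋂ i ∈ s, A i)) + (b : ℝ≥0∞) := hint3
    -- pick the maximal element
    have hPne : P.Nonempty := by
      rw [hP, Finset.powersetCard_nonempty]
      simpa using hMn
    obtain ⟨s₀, hs₀P, hs₀max⟩ := P.exists_max_image (fun s => μ (⋂ i ∈ s, A i)) hPne
    refine ⟨s₀, (Finset.mem_powersetCard.mp hs₀P).2, ?_⟩
    have hPcard : P.card = n.choose M := by
      rw [hP, Finset.card_powersetCard, Finset.card_univ, Fintype.card_fin]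
    have hup : ∑ s ∈ P, μ (⋂ i ∈ s, A i) ≤ (n.choose M : ℝ≥0∞) * μ (⋂ i ∈ s₀, A i) := by
      calc ∑ s ∈ P, μ (⋂ i ∈ s, A i) ≤ P.card • μ (⋂ i ∈ s₀, A i) :=
            Finset.sum_le_card_nsmul _ _ _ (fun s hs => hs₀max s hs)
        _ = (n.choose M : ℝ≥0∞) * μ (⋂ i ∈ s₀, A i) := by
            rw [hPcard, nsmul_eq_mul]
    have hch0 : (0 : ℕ) < n.choose M := Nat.choose_pos hMn
    have := le_trans hfinal hup
    rwa [ENNReal.mul_le_mul_iff_right (by exact_mod_cast hch0.ne') (ENNReal.natCast_ne_top _)] at this
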